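/- For x = ∑_{n=1}^∞ (−1)^n ε_n(x)/(d_1⋯d_n) and y = ∑_{n=1}^∞ (−1)^n ε_n(y)/(d_1⋯d_n), if there exists m such that ε_n(x) = ε_n(y) for all n < 2m and ε_{2m}(x) < ε_{2m}(y), where the tails of both representations are not of the exceptional eventually-(d_k−1,0) or (0,d_k−1) alternating types making equality possible, then x < y. More simply: if ε_n(x) = ε_n(y) for n < 2m and ε_{2m}(x) < ε_{2m}(y), then x ≤ y. -/

import Mathlib

open Finset

/-- Product d_1 d_2 ... d_n. -/
noncomputable def P (d : ℕ → ℕ) (n : ℕ) : ℝ := ∏ i ∈ Finset.Icc 1 n, (d i : ℝ)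

/-- The alternating Cantor series sum ∑_{n≥1} (-1)^n ε_n/(d_1...d_n). -/
noncomputable def negaSum (d ε : ℕ → ℕ) : ℝ :=
  ∑' n : ℕ, (-1 : ℝ) ^ (n + 1) * (ε (n + 1) : ℝ) / P d (n + 1)

/-- a₀ = ∑_{n≥1} (-1)^{n+1}/(d_1...d_n). -/
noncomputable def a0 (d : ℕ → ℕ) : ℝ := ∑' n : ℕ, (-1 : ℝ) ^ n / P d (n + 1)

lemma P_zero (d : ℕ → ℕ) : P d 0 = 1 := by simp [P]

lemma P_succ (d : ℕ → ℕ) (n : ℕ) : P d (n+1) = P d n * d (n+1) := by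
  rw [P, P, Finset.prod_Icc_succ_top (by omega)]

lemma P_pos (d : ℕ → ℕ) (hd : ∀ n, 1 ≤ n → 2 ≤ d n) : ∀ n, 0 < P d n := by
  intro n
  induction n with
  | zero => simp [P_zero]
  | succ k ih =>
    have h2 : (2:ℝ) ≤ d (k+1) := by exact_mod_cast hd (k+1) (by omega)
    rw [P_succ]; exact mul_pos ih (by linarith)

lemma key_id (d : ℕ → ℕ) (hd : ∀ n, 1 ≤ n → 2 ≤ d n) (n : ℕ) :
    ((d (n+1) : ℝ) - 1) / P d (n+1) = 1 / P d n - 1 / P d (n+1) := by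
  have h0 := P_pos d hd n
  have h1 := P_pos d hd (n+1)
  have hs := P_succ d n
  field_simp
  rw [hs]; ring

lemma b_nonneg (d : ℕ → ℕ) (hd : ∀ n, 1 ≤ n → 2 ≤ d n) (n : ℕ) :
    0 ≤ 1 / P d n - 1 / P d (n+1) := by
  rw [← key_id d hd n]
  have h1 := P_pos d hd (n+1)
  have h2 : (2:ℝ) ≤ d (n+1) := by exact_mod_cast hd (n+1) (by omega)
  apply div_nonneg (by linarith) (le_of_lt h1)

lemma digit_bound (d ε : ℕ → ℕ) (hd : ∀ n, 1 ≤ n → 2 ≤ d n)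
    (hε : ∀ n, 1 ≤ n → ε n ≤ d n - 1) (n : ℕ) :
    |(-1 : ℝ) ^ (n + 1) * (ε (n + 1) : ℝ) / P d (n + 1)| ≤ 1 / P d n - 1 / P d (n+1) := by
  rw [← key_id d hd n]
  have h1 := P_pos d hd (n+1)
  have he : (ε (n+1) : ℝ) + 1 ≤ (d (n+1) : ℝ) := by
    have h := hε (n+1) (by omega); have h2 := hd (n+1) (by omega)
    exact_mod_cast (by omega : ε (n+1) + 1 ≤ d (n+1))
  rw [abs_div, abs_mul, abs_pow, abs_neg, abs_one, one_pow, one_mul,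
    abs_of_pos h1, abs_of_nonneg (by positivity : (0:ℝ) ≤ (ε (n+1):ℝ))]
  gcongr
  linarith

lemma summable_b (d : ℕ → ℕ) (hd : ∀ n, 1 ≤ n → 2 ≤ d n) :
    Summable (fun n => 1 / P d n - 1 / P d (n+1)) := by
  apply summable_of_sum_range_le (fun n => b_nonneg d hd n) (c := 1)
  intro n
  rw [Finset.sum_range_sub' (fun k => 1 / P d k), P_zero]
  have h0 := P_pos d hd n
  have h1 : 0 ≤ 1 / P d n := by positivity
  norm_num
  linarith

lemma summable_term (d ε : ℕ → ℕ) (hd : ∀ n, 1 ≤ n → 2 ≤ d n)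
    (hε : ∀ n, 1 ≤ n → ε n ≤ d n - 1) :
    Summable (fun n => (-1 : ℝ) ^ (n + 1) * (ε (n + 1) : ℝ) / P d (n + 1)) := by
  apply Summable.of_abs
  exact (summable_b d hd).of_nonneg_of_le (fun n => abs_nonneg _)
    (fun n => digit_bound d ε hd hε n)

lemma diff_abs_bound (d ε η : ℕ → ℕ) (hd : ∀ n, 1 ≤ n → 2 ≤ d n)
    (hε : ∀ n, 1 ≤ n → ε n ≤ d n - 1) (hη : ∀ n, 1 ≤ n → η n ≤ d n - 1) (n : ℕ) :
    |(-1 : ℝ) ^ (n + 1) * (η (n + 1) : ℝ) / P d (n + 1) -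
      (-1 : ℝ) ^ (n + 1) * (ε (n + 1) : ℝ) / P d (n + 1)| ≤
      1 / P d n - 1 / P d (n+1) := by
  rw [← key_id d hd n]
  have h1 := P_pos d hd (n+1)
  have he : (ε (n+1) : ℝ) + 1 ≤ (d (n+1) : ℝ) := by
    have h := hε (n+1) (by omega); have h2 := hd (n+1) (by omega)
    exact_mod_cast (by omega : ε (n+1) + 1 ≤ d (n+1))
  have hh : (η (n+1) : ℝ) + 1 ≤ (d (n+1) : ℝ) := by
    have h := hη (n+1) (by omega); have h2 := hd (n+1) (by omega)
    exact_mod_cast (by omega : η (n+1) + 1 ≤ d (n+1))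
  have hεn : (0:ℝ) ≤ (ε (n+1) : ℝ) := by positivity
  have hηn : (0:ℝ) ≤ (η (n+1) : ℝ) := by positivity
  have heq : (-1 : ℝ) ^ (n + 1) * (η (n + 1) : ℝ) / P d (n + 1) -
      (-1 : ℝ) ^ (n + 1) * (ε (n + 1) : ℝ) / P d (n + 1) =
      (-1 : ℝ) ^ (n + 1) * (((η (n + 1) : ℝ) - (ε (n + 1) : ℝ)) / P d (n + 1)) := by
    ring
  rw [heq, abs_mul, abs_pow, abs_neg, abs_one, one_pow, one_mul, abs_div,
    abs_of_pos h1]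
  rw [div_le_div_iff₀ h1 h1]
  have habs : |(η (n + 1) : ℝ) - (ε (n + 1) : ℝ)| ≤ (d (n+1) : ℝ) - 1 := by
    rw [abs_le]; constructor <;> linarith
  nlinarith

set_option maxHeartbeats 1000000 in
theorem alternating_cantor_le_of_even_digit_lt (d ε η : ℕ → ℕ) (m : ℕ)
    (hm : 1 ≤ m) (hd : ∀ n, 1 ≤ n → 2 ≤ d n)
    (hε : ∀ n, 1 ≤ n → ε n ≤ d n - 1) (hη : ∀ n, 1 ≤ n → η n ≤ d n - 1)
    (hagree : ∀ n, n < 2 * m → ε n = η n)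
    (hlt : ε (2 * m) < η (2 * m)) :
    negaSum d ε ≤ negaSum d η := by
  set f : ℕ → ℝ := fun n => (-1 : ℝ) ^ (n + 1) * (ε (n + 1) : ℝ) / P d (n + 1) with hf
  set g : ℕ → ℝ := fun n => (-1 : ℝ) ^ (n + 1) * (η (n + 1) : ℝ) / P d (n + 1) with hg
  have hfs : Summable f := summable_term d ε hd hε
  have hgs : Summable g := summable_term d η hd hη
  have hsub : Summable (fun n => g n - f n) := hgs.sub hfs
  have hdiff : negaSum d η - negaSum d ε = ∑' n, (g n - f n) := by
    rw [negaSum, negaSum, ← Summable.tsum_sub hgs hfs]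
  have hsplit := Summable.sum_add_tsum_nat_add (f := fun n => g n - f n) (2 * m) hsub
  have hP2m := P_pos d hd (2 * m)
  -- head sum
  have hhead : 1 / P d (2 * m) ≤ ∑ n ∈ Finset.range (2 * m), (g n - f n) := by
    rw [Finset.sum_eq_single_of_mem (2 * m - 1) (Finset.mem_range.mpr (by omega))]
    · have h1 : 2 * m - 1 + 1 = 2 * m := by omega
      have hev : Even (2 * m) := even_two_mul m
      simp only [hf, hg, h1, hev.neg_one_pow, one_mul]
      have hcast : (ε (2 * m) : ℝ) + 1 ≤ (η (2 * m) : ℝ) := by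
        exact_mod_cast (by omega : ε (2*m) + 1 ≤ η (2*m))
      rw [div_sub_div_same, div_le_div_iff₀ hP2m hP2m]
      nlinarith
    · intro b hb hne
      have hb1 : b + 1 < 2 * m := by
        have := Finset.mem_range.mp hb; omega
      simp [hf, hg, hagree (b + 1) hb1]
  -- tail bound
  have hsubtail : Summable (fun n => g (n + 2*m) - f (n + 2*m)) :=
    (summable_nat_add_iff (2*m)).mpr hsub
  set B : ℕ → ℝ := fun n => 1 / P d (n + 2*m) - 1 / P d (n + 2*m + 1) with hB
  have hBs : Summable B := by
    have := (summable_nat_add_iff (f := fun n => 1 / P d n - 1 / P d (n+1)) (2*m)).mpr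
      (summable_b d hd)
    exact this
  have hbound : ∀ n : ℕ, -(B n) ≤ g (n + 2*m) - f (n + 2*m) := by
    intro n
    have h := diff_abs_bound d ε η hd hε hη (n + 2*m)
    have := (abs_le.mp h).1
    simpa [hB] using this
  have hBsum : ∑' n, B n ≤ 1 / P d (2*m) := by
    apply Real.tsum_le_of_sum_range_le (fun n => b_nonneg d hd (n + 2*m))
    intro N
    have harr : ∀ n : ℕ, B n = 1 / P d (n + 2*m) - 1 / P d (n + 1 + 2*m) := by
      intro n; simp only [hB]; rw [show n + 2*m + 1 = n + 1 + 2*m from by omega]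
    calc ∑ n ∈ Finset.range N, B n
        = ∑ n ∈ Finset.range N, (1 / P d (n + 2*m) - 1 / P d (n + 1 + 2*m)) := by
          exact Finset.sum_congr rfl (fun i _ => harr i)
      _ = 1 / P d (0 + 2*m) - 1 / P d (N + 2*m) :=
          Finset.sum_range_sub' (fun k => 1 / P d (k + 2*m)) N
      _ ≤ 1 / P d (2*m) := by
          have hp := P_pos d hd (N + 2*m)
          have hnn : 0 ≤ 1 / P d (N + 2*m) := by positivity
          simp only [Nat.zero_add]
          linarith
  have htail : -(1 / P d (2*m)) ≤ ∑' n, (g (n + 2*m) - f (n + 2*m)) := by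
    have h1 : ∑' n, -(B n) ≤ ∑' n, (g (n + 2*m) - f (n + 2*m)) :=
      Summable.tsum_le_tsum hbound hBs.neg hsubtail
    rw [tsum_neg] at h1
    linarith
  have : 0 ≤ negaSum d η - negaSum d ε := by
    rw [hdiff, ← hsplit]
    linarith
  linarith
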